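/- If every string matched by r has length satisfying predicate φ, then every string matched by Repeat(r, k) has length n such that there exist n₁, n₂ satisfying φ(n₁), φ(n₂), n ≥ n₁·k, and n ≤ n₂·k. (Soundness of the length encoding for Repeat.) -/
import Mathlib


/-- `RepMatch M r k s` : `s` is a concatenation of exactly `k` strings each matching `r`. -/
def RepMatch {α R : Type*} (M : R → List α → Prop) (r : R) (k : ℕ) (s : List α) : Prop :=
  ∃ parts : List (List α), parts.length = k ∧ (∀ p ∈ parts, M r p) ∧ parts.flatten = s

/-- `ConcatMatch M r₁ r₂ s` : `s` splits as `s₁ ++ s₂` with `r₁` matching `s₁`, `r₂` matching `s₂`. -/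
def ConcatMatch {α R : Type*} (M : R → List α → Prop) (r₁ r₂ : R) (s : List α) : Prop :=
  ∃ s₁ s₂ : List α, s = s₁ ++ s₂ ∧ M r₁ s₁ ∧ M r₂ s₂

theorem repeat_length_encoding {α R : Type*} (M : R → List α → Prop) (r : R) (k : ℕ)
    (hk : 1 ≤ k) (φ : ℕ → Prop) (h : ∀ s, M r s → φ s.length) :
    ∀ s : List α, RepMatch M r k s →
      ∃ n₁ n₂, φ n₁ ∧ φ n₂ ∧ n₁ * k ≤ s.length ∧ s.length ≤ n₂ * k := by
  rintro s ⟨parts, hlen, hall, rfl⟩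
  have hne : parts ≠ [] := by
    intro he; rw [he] at hlen; simp at hlen; omega
  have hfne : ((parts.map List.length).toFinset).Nonempty := by
    simp [List.toFinset_nonempty_iff, hne]
  obtain ⟨n₁, hn₁mem, hn₁min⟩ := Finset.exists_min_image _ id hfne
  obtain ⟨n₂, hn₂mem, hn₂max⟩ := Finset.exists_max_image _ id hfne
  simp only [List.mem_toFinset, List.mem_map] at hn₁mem hn₂mem
  obtain ⟨p₁, hp₁, rfl⟩ := hn₁mem
  obtain ⟨p₂, hp₂, rfl⟩ := hn₂mem
  refine ⟨p₁.length, p₂.length, h _ (hall _ hp₁), h _ (hall _ hp₂), ?_, ?_⟩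
  · rw [List.length_flatten]
    calc p₁.length * k = p₁.length * (parts.map List.length).length := by simp [hlen]
      _ ≤ (parts.map List.length).sum := by
          rw [mul_comm, ← smul_eq_mul]
          exact List.card_nsmul_le_sum _ _ (fun x hx => hn₁min x (by simpa using List.mem_toFinset.2 hx))
  · rw [List.length_flatten]
    calc (parts.map List.length).sum ≤ (parts.map List.length).length • p₂.length :=
          List.sum_le_card_nsmul _ _ (fun x hx => hn₂max x (by simpa using List.mem_toFinset.2 hx))
      _ = p₂.length * k := by simp [hlen, mul_comm]
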